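/- arXiv:1307.7793 — 3 statements merged into one kernel-verified Lean document; each statement's English description precedes it below -/
import Mathlib

section
/- For every value b' in the image of the characteristic set under H (i.e., b' = H(x) for some x ∈ χ_g), there exists x* ∈ χ_g with H(x*) = b' and f(x*) = min{ f(x) : x ∈ {0,1}^n, H(x) = b' }; that is, every constraint instance realized by the characteristic set is solved exactly by some element of the characteristic set. -/
/-- Every constraint instance `b'` realized by the characteristic set
`χ_g = ⋃_{λ} argmin_x L(x,λ)` is solved exactly by some element of the characteristic set:
there is `x* ∈ χ_g` with `H(x*) = b'` and `f(x*) = min { f(x) : H(x) = b' }`. -/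
theorem stmt_1 (n m : ℕ) (hn : 0 < n) (hm : 0 < m)
    (f : (Fin n → Bool) → ℝ) (H : (Fin n → Bool) → (Fin m → ℝ)) (b : Fin m → ℝ)
    (L : (Fin n → Bool) → (Fin m → ℝ) → ℝ)
    (hL : ∀ x lam, L x lam = f x + ∑ i, lam i * (H x i - b i))
    (chi : Set (Fin n → Bool))
    (hchi : chi = {x | ∃ lam : Fin m → ℝ, ∀ y : Fin n → Bool, L x lam ≤ L y lam})
    (b' : Fin m → ℝ) (hb' : b' ∈ H '' chi) :
    ∃ xstar ∈ chi, H xstar = b' ∧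
      IsLeast (f '' {x : Fin n → Bool | H x = b'}) (f xstar) := by
  classical
  obtain ⟨x0, hx0chi, hx0H⟩ := hb'
  rw [hchi] at hx0chi
  obtain ⟨lam0, hlam0⟩ := hx0chi
  -- the feasible set as a finset
  have hmem : x0 ∈ Finset.univ.filter (fun x => H x = b') := by
    simp [hx0H]
  obtain ⟨xs, hxs, hmin⟩ := Finset.exists_min_image
    (Finset.univ.filter (fun x => H x = b')) f ⟨x0, hmem⟩
  have hxsH : H xs = b' := by simpa using hxs
  have hfmin : ∀ x : Fin n → Bool, H x = b' → f xs ≤ f x := by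
    intro x hx
    exact hmin x (by simp [hx])
  -- L agrees with f + const on the feasible set
  have hconst : ∀ x : Fin n → Bool, H x = b' →
      L x lam0 = f x + ∑ i, lam0 i * (b' i - b i) := by
    intro x hx
    rw [hL]; rw [hx]
  refine ⟨xs, ?_, hxsH, ?_⟩
  · rw [hchi]
    refine ⟨lam0, fun y => ?_⟩
    calc L xs lam0 = f xs + ∑ i, lam0 i * (b' i - b i) := hconst xs hxsH
      _ ≤ f x0 + ∑ i, lam0 i * (b' i - b i) := by
          gcongr; exact hfmin x0 hx0H
      _ = L x0 lam0 := (hconst x0 hx0H).symm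
      _ ≤ L y lam0 := hlam0 y
  · constructor
    · exact ⟨xs, hxsH, rfl⟩
    · rintro v ⟨x, hx, rfl⟩
      exact hfmin x hx
end

section
/- Elements of the characteristic set with equal constraint values have equal objective values: if x₁, x₂ ∈ χ_g and H(x₁) = H(x₂), then f(x₁) = f(x₂). -/
/-- Elements of the characteristic set with equal constraint values have equal
objective values: if `x₁, x₂ ∈ χ_g` and `H(x₁) = H(x₂)` then `f(x₁) = f(x₂)`. -/
theorem stmt_9 (n m : ℕ) (hn : 0 < n) (hm : 0 < m)
    (f : (Fin n → Bool) → ℝ) (H : (Fin n → Bool) → (Fin m → ℝ)) (b : Fin m → ℝ)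
    (L : (Fin n → Bool) → (Fin m → ℝ) → ℝ)
    (hL : ∀ x lam, L x lam = f x + ∑ i, lam i * (H x i - b i))
    (chi : Set (Fin n → Bool))
    (hchi : chi = {x | ∃ lam : Fin m → ℝ, ∀ y : Fin n → Bool, L x lam ≤ L y lam})
    (x₁ x₂ : Fin n → Bool) (h₁ : x₁ ∈ chi) (h₂ : x₂ ∈ chi)
    (hH : H x₁ = H x₂) :
    f x₁ = f x₂ := by
  rw [hchi] at h₁ h₂
  obtain ⟨l₁, hl₁⟩ := h₁
  obtain ⟨l₂, hl₂⟩ := h₂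
  have e₁ := hl₁ x₂
  have e₂ := hl₂ x₁
  rw [hL, hL, hH] at e₁
  rw [hL, hL, hH] at e₂
  linarith
end

section
/- Slack-variable lemma for inequality constraints: suppose (x*, y*) ∈ {0,1}^n × ∏_{i=1}^m [0, k_i] satisfies L̂(x*, y*, λ*) = ĝ(λ*) for some λ* ∈ ℝ^m, and let b* = H(x*) + y*. Then f(x*) = min{ f(x) : x ∈ {0,1}^n, b* − k ≤ H(x) ≤ b* componentwise }. -/
/-- Slack-variable lemma for inequality constraints. If
`(x*, y*) ∈ {0,1}^n × ∏ᵢ [0,kᵢ]` attains the dual value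
`ĝ(λ*) = min_{x,y} L̂(x,y,λ*)` where `L̂(x,y,λ) = f(x) + λᵀ(H(x) + y − b̄)`, and
`b* = H(x*) + y*`, then `f(x*) = min { f(x) : b* − k ≤ H(x) ≤ b* componentwise }`. -/
theorem stmt_10 (n m : ℕ) (hn : 0 < n) (hm : 0 < m)
    (f : (Fin n → Bool) → ℝ) (H : (Fin n → Bool) → (Fin m → ℝ))
    (bbar k : Fin m → ℝ) (hk : ∀ i, 0 ≤ k i)
    (Lhat : (Fin n → Bool) → (Fin m → ℝ) → (Fin m → ℝ) → ℝ)
    (hLhat : ∀ x y lam, Lhat x y lam = f x + ∑ i, lam i * (H x i + y i - bbar i))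
    (xstar : Fin n → Bool) (ystar : Fin m → ℝ) (lamstar : Fin m → ℝ)
    (hystar : ∀ i, ystar i ∈ Set.Icc 0 (k i))
    (hmin : ∀ (x : Fin n → Bool) (y : Fin m → ℝ), (∀ i, y i ∈ Set.Icc 0 (k i)) →
        Lhat xstar ystar lamstar ≤ Lhat x y lamstar)
    (bstar : Fin m → ℝ) (hbstar : bstar = fun i => H xstar i + ystar i) :
    IsLeast (f '' {x : Fin n → Bool | ∀ i, bstar i - k i ≤ H x i ∧ H x i ≤ bstar i})
      (f xstar) := by
  subst hbstar
  constructor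
  · refine ⟨xstar, fun i => ?_, rfl⟩
    obtain ⟨h1, h2⟩ := hystar i
    constructor <;> simp <;> linarith
  · rintro v ⟨x, hx, rfl⟩
    simp only [Set.mem_setOf_eq] at hx
    set y : Fin m → ℝ := fun i => H xstar i + ystar i - H x i with hy
    have hyIcc : ∀ i, y i ∈ Set.Icc 0 (k i) := by
      intro i
      obtain ⟨h1, h2⟩ := hx i
      constructor <;> simp [hy] <;> linarith
    have h := hmin x y hyIcc
    rw [hLhat, hLhat] at h
    have hsum : ∀ i ∈ Finset.univ, lamstar i * (H x i + y i - bbar i)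
        = lamstar i * (H xstar i + ystar i - bbar i) := by
      intro i _; simp [hy]
    rw [Finset.sum_congr rfl hsum] at h
    linarith
end
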